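/- There is a constant C > 0 such that every feasible port-numbered graph with n nodes and diameter D has election index at most C·D·(1 + log(n/D)). -/

import Mathlib

namespace Election

/-- A port-numbered graph: a simple undirected connected graph on `n ≥ 3` unlabeled nodes
(vertex set `Fin n`) in which, at each node `v` of degree `d`, the edges incident to `v`
carry distinct port numbers `0, …, d-1` at `v`. `portNum v u` is the port number at `v`
of the edge `{v, u}` (meaningful only when `v` and `u` are adjacent). -/
structure PortGraph where
  n : ℕ
  three_le : 3 ≤ n
  G : SimpleGraph (Fin n)
  conn : G.Connected
  portNum : Fin n → Fin n → ℕ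
  port_lt : ∀ v u : Fin n, G.Adj v u → portNum v u < Nat.card {w : Fin n // G.Adj v w}
  port_inj : ∀ v u w : Fin n, G.Adj v u → G.Adj v w → portNum v u = portNum v w → u = w

namespace PortGraph

/-- The degree of a node. -/
noncomputable def degree (PG : PortGraph) (v : Fin PG.n) : ℕ :=
  Nat.card {w : Fin PG.n // PG.G.Adj v w}

open Classical in
/-- The neighbor of `v` reached through port `p` (junk value `v` if there is none). -/
noncomputable def nbr (PG : PortGraph) (v : Fin PG.n) (p : ℕ) : Fin PG.n :=
  if h : ∃ u : Fin PG.n, PG.G.Adj v u ∧ PG.portNum v u = p then h.choose else v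

/-- Abstract (augmented truncated) views: a view at depth `0` is a leaf carrying a degree;
a view at depth `ℓ+1` is a node whose children are listed in the order of the port numbers
`0, …, d-1` at the root, each child carrying the port number at the other endpoint of the
corresponding edge together with the subview at depth `ℓ`. -/
inductive AugView : Type
  | leaf (deg : ℕ) : AugView
  | node (children : List (ℕ × AugView)) : AugView

/-- The augmented truncated view `B^ℓ(v)` of node `v` at depth `ℓ`. -/
noncomputable def augView (PG : PortGraph) : ℕ → Fin PG.n → AugView
  | 0, v => AugView.leaf (PG.degree v)
  | (ℓ + 1), v => AugView.node ((List.range (PG.degree v)).map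
      fun p => (PG.portNum (PG.nbr v p) v, PG.augView ℓ (PG.nbr v p)))

/-- `IsPath PG v s vs` means: the sequence `s = (p₁, q₁, …, p_k, q_k)` of port numbers codes
a path in `PG` starting at `v` whose i-th edge carries port `p_i` at the endpoint closer to
`v` and `q_i` at the other endpoint, and `vs` is the list of visited vertices (from `v` on). -/
inductive IsPath (PG : PortGraph) : Fin PG.n → List ℕ → List (Fin PG.n) → Prop
  | nil (v : Fin PG.n) : IsPath PG v [] [v]
  | cons (v u : Fin PG.n) (p q : ℕ) (rest : List ℕ) (vs : List (Fin PG.n))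
      (hadj : PG.G.Adj v u) (hp : PG.portNum v u = p) (hq : PG.portNum u v = q)
      (htail : IsPath PG u rest vs) : IsPath PG v (p :: q :: rest) (v :: vs)

/-- `P` is a leader election output for `PG`: every node `v` outputs a sequence of port
numbers coding a simple path starting at `v`, and all these paths end at a common node. -/
def IsLeaderElection (PG : PortGraph) (P : Fin PG.n → List ℕ) : Prop :=
  ∃ leader : Fin PG.n, ∀ v : Fin PG.n, ∃ vs : List (Fin PG.n),
    PG.IsPath v (P v) vs ∧ vs.Nodup ∧ vs.getLast? = some leader

/-- A graph is feasible if at some depth all augmented truncated views are pairwise distinct. -/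
def Feasible (PG : PortGraph) : Prop :=
  ∃ ℓ : ℕ, Function.Injective (PG.augView ℓ)

/-- The election index: the smallest depth at which all augmented truncated views are distinct. -/
noncomputable def electionIndex (PG : PortGraph) : ℕ :=
  sInf {ℓ : ℕ | Function.Injective (PG.augView ℓ)}

/-- The diameter: the maximum distance between two nodes. -/
noncomputable def diam (PG : PortGraph) : ℕ :=
  sSup (Set.range fun p : Fin PG.n × Fin PG.n => PG.G.dist p.1 p.2)

end PortGraph



section Aux

open PortGraph Classical

noncomputable instance : DecidableEq PortGraph.AugView := Classical.decEq _
instance : Inhabited PortGraph.AugView := ⟨PortGraph.AugView.leaf 0⟩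

variable (PG : PortGraph)

lemma exists_ne_of_three_le (v : Fin PG.n) : ∃ u : Fin PG.n, u ≠ v := by
  have h : 1 < PG.n := by have := PG.three_le; omega
  haveI : Nontrivial (Fin PG.n) := Fin.nontrivial_iff_two_le.mpr (by omega)
  exact exists_ne v

lemma degree_pos (v : Fin PG.n) : 0 < PG.degree v := by
  obtain ⟨u, hu⟩ := exists_ne_of_three_le PG v
  have hr : PG.G.Reachable v u := PG.conn v u
  obtain ⟨w⟩ := hr
  have : ∃ x, PG.G.Adj v x := by
    cases w with
    | nil => exact absurd rfl (Ne.symm hu)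
    | cons h p => exact ⟨_, h⟩
  obtain ⟨x, hx⟩ := this
  have : Nonempty {w : Fin PG.n // PG.G.Adj v w} := ⟨⟨x, hx⟩⟩
  have : 0 < Nat.card {w : Fin PG.n // PG.G.Adj v w} := Nat.card_pos
  exact this

lemma nbr_spec {v : Fin PG.n} {p : ℕ} (hp : p < PG.degree v) :
    PG.G.Adj v (PG.nbr v p) ∧ PG.portNum v (PG.nbr v p) = p := by
  have hex : ∃ u : Fin PG.n, PG.G.Adj v u ∧ PG.portNum v u = p := by
    classical
    haveI : Fintype {w : Fin PG.n // PG.G.Adj v w} := Fintype.ofFinite _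
    set f : {w : Fin PG.n // PG.G.Adj v w} → Fin (PG.degree v) :=
      fun w => ⟨PG.portNum v w, PG.port_lt v w w.2⟩ with hf
    have hinj : Function.Injective f := by
      intro a b hab
      have : PG.portNum v a = PG.portNum v b := congrArg Fin.val hab
      exact Subtype.ext (PG.port_inj v a b a.2 b.2 this)
    have hcard : Fintype.card {w : Fin PG.n // PG.G.Adj v w} = Fintype.card (Fin (PG.degree v)) := by
      simp [PortGraph.degree, Nat.card_eq_fintype_card]
    have hbij : Function.Bijective f :=
      (Fintype.bijective_iff_injective_and_card f).2 ⟨hinj, hcard⟩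
    obtain ⟨w, hw⟩ := hbij.2 ⟨p, hp⟩
    exact ⟨w, w.2, congrArg Fin.val hw⟩
  rw [PortGraph.nbr, dif_pos hex]
  exact hex.choose_spec

lemma nbr_adj {v : Fin PG.n} {p : ℕ} (hp : p < PG.degree v) : PG.G.Adj v (PG.nbr v p) :=
  (nbr_spec PG hp).1

lemma portNum_nbr {v : Fin PG.n} {p : ℕ} (hp : p < PG.degree v) :
    PG.portNum v (PG.nbr v p) = p := (nbr_spec PG hp).2

lemma nbr_portNum {v u : Fin PG.n} (h : PG.G.Adj v u) : PG.nbr v (PG.portNum v u) = u := by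
  have hp : PG.portNum v u < PG.degree v := PG.port_lt v u h
  exact PG.port_inj v _ u (nbr_adj PG hp) h (portNum_nbr PG hp)

lemma augView_zero (v : Fin PG.n) : PG.augView 0 v = AugView.leaf (PG.degree v) := rfl

lemma augView_succ (ℓ : ℕ) (v : Fin PG.n) :
    PG.augView (ℓ + 1) v = AugView.node ((List.range (PG.degree v)).map
      fun p => (PG.portNum (PG.nbr v p) v, PG.augView ℓ (PG.nbr v p))) := rfl

/-- characterization of equality of views at depth ℓ+1. -/
lemma augView_succ_eq_iff {ℓ : ℕ} {u v : Fin PG.n} :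
    PG.augView (ℓ + 1) u = PG.augView (ℓ + 1) v ↔
      PG.degree u = PG.degree v ∧ ∀ p < PG.degree u,
        (PG.portNum (PG.nbr u p) u = PG.portNum (PG.nbr v p) v ∧
         PG.augView ℓ (PG.nbr u p) = PG.augView ℓ (PG.nbr v p)) := by
  rw [augView_succ, augView_succ]
  constructor
  · intro h
    have hlist := AugView.node.inj h
    have hlen : PG.degree u = PG.degree v := by
      have := congrArg List.length hlist
      simpa using this
    refine ⟨hlen, fun p hp => ?_⟩
    have hp' : p < PG.degree v := hlen ▸ hp
    have := congrArg (fun l => l[p]?) hlist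
    simp only [List.getElem?_map, List.getElem?_range hp, List.getElem?_range hp', Option.map_some] at this
    have := Option.some.inj this
    exact ⟨congrArg Prod.fst this, congrArg Prod.snd this⟩
  · rintro ⟨hlen, h⟩
    congr 1
    apply List.ext_get
    · simp [hlen]
    · intro i h1 h2
      simp only [List.get_eq_getElem, List.getElem_map, List.getElem_range]
      have hi : i < PG.degree u := by simpa using h1
      exact Prod.ext (h i hi).1 (h i hi).2

/-- equality at depth ℓ+1 implies equality at depth ℓ. -/
lemma augView_mono_succ : ∀ (ℓ : ℕ) {u v : Fin PG.n},
    PG.augView (ℓ + 1) u = PG.augView (ℓ + 1) v → PG.augView ℓ u = PG.augView ℓ v := by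
  intro ℓ
  induction ℓ with
  | zero =>
    intro u v h
    have := ((augView_succ_eq_iff PG).1 h).1
    rw [augView_zero, augView_zero, this]
  | succ ℓ ih =>
    intro u v h
    obtain ⟨hd, hch⟩ := (augView_succ_eq_iff PG).1 h
    exact (augView_succ_eq_iff PG).2 ⟨hd, fun p hp => ⟨(hch p hp).1, ih (hch p hp).2⟩⟩

lemma augView_mono {PG : PortGraph} {ℓ ℓ' : ℕ} (hle : ℓ' ≤ ℓ) {u v : Fin PG.n}
    (h : PG.augView ℓ u = PG.augView ℓ v) : PG.augView ℓ' u = PG.augView ℓ' v := by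
  induction ℓ with
  | zero => have : ℓ' = 0 := Nat.le_zero.mp hle; subst this; exact h
  | succ ℓ ih =>
    rcases Nat.lt_or_ge ℓ' (ℓ+1) with h1 | h1
    · exact ih (Nat.lt_succ_iff.mp h1) (augView_mono_succ PG ℓ h)
    · have : ℓ' = ℓ + 1 := le_antisymm hle h1; subst this; exact h

/-- Stability: if no class splits from depth ℓ to ℓ+1, none splits afterwards. -/
lemma stability {ℓ : ℕ}
    (H : ∀ x y : Fin PG.n, PG.augView ℓ x = PG.augView ℓ y → PG.augView (ℓ+1) x = PG.augView (ℓ+1) y) :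
    ∀ k, ∀ x y : Fin PG.n, PG.augView ℓ x = PG.augView ℓ y → PG.augView (ℓ+k) x = PG.augView (ℓ+k) y := by
  have key : ∀ k, ∀ x y : Fin PG.n,
      PG.augView (ℓ+k) x = PG.augView (ℓ+k) y → PG.augView (ℓ+k+1) x = PG.augView (ℓ+k+1) y := by
    intro k
    induction k with
    | zero => exact H
    | succ k ih =>
      intro x y h
      have h' : PG.augView (ℓ + k + 1) x = PG.augView (ℓ + k + 1) y := by
        have : ℓ + (k+1) = (ℓ + k) + 1 := by ring
        rw [this] at h; exact h
      obtain ⟨hd, hch⟩ := (augView_succ_eq_iff PG).1 h'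
      have : PG.augView (ℓ + (k+1) + 1) x = PG.augView (ℓ + (k+1) + 1) y := by
        have e : ℓ + (k+1) + 1 = (ℓ + k + 1) + 1 := by ring
        rw [e]
        exact (augView_succ_eq_iff PG).2 ⟨hd, fun p hp => ⟨(hch p hp).1, ih _ _ (hch p hp).2⟩⟩
      exact this
  intro k
  induction k with
  | zero => intro x y h; simpa using h
  | succ k ih =>
    intro x y h
    have := key k x y (ih x y h)
    have e : ℓ + (k+1) = ℓ + k + 1 := by ring
    rw [e]; exact this

lemma injective_electionIndex (hf : PG.Feasible) :
    Function.Injective (PG.augView PG.electionIndex) :=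
  Nat.sInf_mem hf

lemma not_injective_of_lt {m : ℕ} (hm : m < PG.electionIndex) :
    ¬ Function.Injective (PG.augView m) :=
  Nat.notMem_of_lt_sInf hm

/-- Below the election index, some class splits. -/
lemma exists_split_pair (hf : PG.Feasible) {m : ℕ} (hm : m < PG.electionIndex) :
    ∃ u v : Fin PG.n, u ≠ v ∧ PG.augView m u = PG.augView m v ∧
      PG.augView (m+1) u ≠ PG.augView (m+1) v := by
  by_contra hcon
  push_neg at hcon
  have H : ∀ x y : Fin PG.n, PG.augView m x = PG.augView m y →
      PG.augView (m+1) x = PG.augView (m+1) y := by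
    intro x y hxy
    by_cases hne : x = y
    · subst hne; rfl
    · exact hcon x y hne hxy
  have hinj : Function.Injective (PG.augView m) := by
    intro x y hxy
    have := stability PG H (PG.electionIndex - m) x y hxy
    have e : m + (PG.electionIndex - m) = PG.electionIndex := by omega
    rw [e] at this
    exact injective_electionIndex PG hf this
  exact not_injective_of_lt PG hm hinj

/-- number of distinct views at depth ℓ -/
noncomputable def nviews (ℓ : ℕ) : ℕ := (Finset.univ.image (PG.augView ℓ)).card

lemma nviews_lt_succ (hf : PG.Feasible) {m : ℕ} (hm : m < PG.electionIndex) :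
    nviews PG m < nviews PG (m+1) := by
  classical
  obtain ⟨u, v, huv, heq, hne⟩ := exists_split_pair PG hf hm
  set τ : AugView → AugView := fun a =>
    if h : ∃ x : Fin PG.n, PG.augView (m+1) x = a then PG.augView m h.choose
    else AugView.leaf 0 with hτ
  have hτval : ∀ x : Fin PG.n, τ (PG.augView (m+1) x) = PG.augView m x := by
    intro x
    have hex : ∃ y : Fin PG.n, PG.augView (m+1) y = PG.augView (m+1) x := ⟨x, rfl⟩
    simp only [hτ, dif_pos hex]
    exact augView_mono (Nat.le_succ m) hex.choose_spec
  have hsurj : Set.SurjOn τ ((Finset.univ.image (PG.augView (m+1))).erase (PG.augView (m+1) u))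
      (Finset.univ.image (PG.augView m)) := by
    intro b hb
    simp only [Finset.coe_image, Set.mem_image] at hb
    obtain ⟨x, _, hx⟩ := hb
    by_cases hxu : PG.augView (m+1) x = PG.augView (m+1) u
    · refine ⟨PG.augView (m+1) v, ?_, ?_⟩
      · simp only [Finset.coe_erase, Set.mem_diff, Finset.coe_image]
        constructor
        · exact ⟨v, by simp, rfl⟩
        · simp only [Set.mem_singleton_iff]
          intro hvv
          exact hne hvv.symm
      · rw [hτval v, ← hx]
        have : PG.augView m x = PG.augView m u := augView_mono (Nat.le_succ m) hxu
        rw [this, heq]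
    · refine ⟨PG.augView (m+1) x, ?_, by rw [hτval x, hx]⟩
      simp only [Finset.coe_erase, Set.mem_diff, Finset.coe_image]
      exact ⟨⟨x, by simp, rfl⟩, by simpa using hxu⟩
  have h1 : nviews PG m ≤ ((Finset.univ.image (PG.augView (m+1))).erase (PG.augView (m+1) u)).card :=
    Finset.card_le_card_of_surjOn τ hsurj
  have h2 : ((Finset.univ.image (PG.augView (m+1))).erase (PG.augView (m+1) u)).card <
      (Finset.univ.image (PG.augView (m+1))).card := by
    apply Finset.card_erase_lt_of_mem
    exact Finset.mem_image.2 ⟨u, Finset.mem_univ u, rfl⟩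
  exact lt_of_le_of_lt h1 h2

lemma nviews_ge (hf : PG.Feasible) : ∀ ℓ, ℓ ≤ PG.electionIndex → ℓ + 1 ≤ nviews PG ℓ := by
  intro ℓ
  induction ℓ with
  | zero =>
    intro _
    have hne : (Finset.univ.image (PG.augView 0)).Nonempty := by
      refine ⟨PG.augView 0 ⟨0, by have := PG.three_le; omega⟩, ?_⟩
      exact Finset.mem_image.2 ⟨_, Finset.mem_univ _, rfl⟩
    exact Nat.one_le_iff_ne_zero.mpr (Finset.card_pos.2 hne).ne'
  | succ ℓ ih =>
    intro hle
    have hlt : ℓ < PG.electionIndex := by omega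
    have := nviews_lt_succ PG hf hlt
    have := ih (le_of_lt hlt)
    omega

lemma portNum_lt_degree {v u : Fin PG.n} (h : PG.G.Adj v u) :
    PG.portNum v u < PG.degree v := PG.port_lt v u h

/-- Walks coded by port-number pairs. -/
inductive PWalk (PG : PortGraph) : Fin PG.n → List (ℕ × ℕ) → Fin PG.n → Prop
  | nil (v : Fin PG.n) : PWalk PG v [] v
  | cons {v u w : Fin PG.n} {p q : ℕ} {s : List (ℕ × ℕ)}
      (hadj : PG.G.Adj v u) (hp : PG.portNum v u = p) (hq : PG.portNum u v = q)
      (ht : PWalk PG u s w) : PWalk PG v ((p, q) :: s) w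

lemma pwalk_forward_unique {v w w' : Fin PG.n} {s : List (ℕ × ℕ)}
    (h1 : PWalk PG v s w) (h2 : PWalk PG v s w') : w = w' := by
  induction h1 generalizing w' with
  | nil => cases h2; rfl
  | cons hadj hp hq ht ih =>
    cases h2 with
    | cons hadj' hp' hq' ht' =>
      have := PG.port_inj _ _ _ hadj hadj' (hp.trans hp'.symm)
      subst this
      exact ih ht'

lemma pwalk_backward_unique {v v' w : Fin PG.n} {s : List (ℕ × ℕ)}
    (h1 : PWalk PG v s w) (h2 : PWalk PG v' s w) : v = v' := by
  induction h1 generalizing v' with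
  | nil => cases h2; rfl
  | @cons a u b p q t hadj hp hq ht ih =>
    cases h2 with
    | @cons a' u' _ _ _ _ hadj' hp' hq' ht' =>
      have hu : u = u' := ih ht'
      subst hu
      exact PG.port_inj u _ _ hadj.symm hadj'.symm (hq.trans hq'.symm)

lemma pwalk_append {v w z : Fin PG.n} {s t : List (ℕ × ℕ)}
    (h1 : PWalk PG v s w) (h2 : PWalk PG w t z) : PWalk PG v (s ++ t) z := by
  induction h1 with
  | nil => simpa using h2
  | cons hadj hp hq ht ih => exact PWalk.cons hadj hp hq (ih h2)

lemma pwalk_reverse {v w : Fin PG.n} {s : List (ℕ × ℕ)} (h : PWalk PG v s w) :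
    PWalk PG w ((s.map Prod.swap).reverse) v := by
  induction h with
  | nil => exact PWalk.nil _
  | @cons a u b p q t hadj hp hq ht ih =>
    have step : PWalk PG u [(q, p)] a := PWalk.cons hadj.symm hq hp (PWalk.nil a)
    have := pwalk_append PG ih step
    simpa using this

lemma pwalk_length_reverse {s : List (ℕ × ℕ)} : ((s.map Prod.swap).reverse).length = s.length := by
  simp

lemma pwalk_of_walk {u x : Fin PG.n} (w : PG.G.Walk u x) :
    ∃ s : List (ℕ × ℕ), PWalk PG u s x ∧ s.length = w.length := by
  induction w with
  | nil => exact ⟨[], PWalk.nil _, rfl⟩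
  | @cons a b c hadj t ih =>
    obtain ⟨s, hs, hlen⟩ := ih
    exact ⟨(PG.portNum a b, PG.portNum b a) :: s,
      PWalk.cons hadj rfl rfl hs, by simp [hlen]⟩

/-- View transfer along port walks. -/
lemma view_transfer : ∀ (s : List (ℕ × ℕ)) (M : ℕ) (x y x₁ : Fin PG.n),
    s.length ≤ M → PG.augView M x = PG.augView M y → PWalk PG x s x₁ →
    ∃ y₁ : Fin PG.n, PWalk PG y s y₁ ∧
      PG.augView (M - s.length) x₁ = PG.augView (M - s.length) y₁ := by
  intro s
  induction s with
  | nil =>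
    intro M x y x₁ _ heq hw
    cases hw
    exact ⟨y, PWalk.nil y, by simpa using heq⟩
  | cons pq t ih =>
    intro M x y x₁ hlen heq hw
    cases hw with
    | @cons _ u _ p q _ hadj hp hq ht =>
      obtain ⟨M', rfl⟩ : ∃ M', M = M' + 1 := by
        cases M with
        | zero => simp at hlen
        | succ M' => exact ⟨M', rfl⟩
      obtain ⟨hdeg, hch⟩ := (augView_succ_eq_iff PG).1 heq
      have hplt : p < PG.degree x := hp ▸ portNum_lt_degree PG hadj
      have hxu : PG.nbr x p = u := by rw [← hp]; exact nbr_portNum PG hadj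
      have hplty : p < PG.degree y := hdeg ▸ hplt
      set u' := PG.nbr y p with hu'
      have hadj' : PG.G.Adj y u' := nbr_adj PG hplty
      have hp' : PG.portNum y u' = p := portNum_nbr PG hplty
      have hq' : PG.portNum u' y = q := by
        have := (hch p hplt).1
        rw [hxu] at this
        rw [← this, ← hq]
      have hveq : PG.augView M' u = PG.augView M' u' := by
        have := (hch p hplt).2
        rwa [hxu] at this
      have hlen' : t.length ≤ M' := by simpa using hlen
      obtain ⟨y₁, hw', heq'⟩ := ih M' u u' x₁ hlen' hveq ht
      refine ⟨y₁, PWalk.cons hadj' hp' hq' hw', ?_⟩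
      simpa using heq'

lemma dist_le_diam (u v : Fin PG.n) : PG.G.dist u v ≤ PG.diam := by
  have hfin : (Set.range fun p : Fin PG.n × Fin PG.n => PG.G.dist p.1 p.2).Finite :=
    Set.finite_range _
  exact le_csSup hfin.bddAbove ⟨(u, v), rfl⟩

/-- The companion lemma. -/
lemma companion (hf : PG.Feasible) {m : ℕ} (hD : PG.diam ≤ m) (hm : m < PG.electionIndex)
    (x : Fin PG.n) :
    ∃ x' : Fin PG.n, PG.augView (m - PG.diam) x = PG.augView (m - PG.diam) x' ∧
      PG.augView (m + PG.diam + 1) x ≠ PG.augView (m + PG.diam + 1) x' := by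
  obtain ⟨u, v, huv, heq, hne⟩ := exists_split_pair PG hf hm
  obtain ⟨w, hwlen⟩ := PG.conn.exists_walk_length_eq_dist u x
  obtain ⟨s, hs, hslen⟩ := pwalk_of_walk PG w
  have hd : s.length ≤ PG.diam := by rw [hslen, hwlen]; exact dist_le_diam PG u x
  have hdm : s.length ≤ m := le_trans hd hD
  obtain ⟨x', hwx', heq'⟩ := view_transfer PG s m u v x hdm heq hs
  refine ⟨x', ?_, ?_⟩
  · exact augView_mono (by omega) heq'
  · intro hcon
    set st := (s.map Prod.swap).reverse with hst
    have hru : PWalk PG x st u := pwalk_reverse PG hs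
    have hrv : PWalk PG x' st v := pwalk_reverse PG hwx'
    have hstlen : st.length ≤ m + PG.diam + 1 := by
      rw [hst, pwalk_length_reverse]; omega
    obtain ⟨z, hwz, heqz⟩ := view_transfer PG st (m + PG.diam + 1) x x' u hstlen hcon hru
    have hz : z = v := pwalk_forward_unique PG hwz hrv
    subst hz
    have : m + 1 ≤ m + PG.diam + 1 - st.length := by
      rw [hst, pwalk_length_reverse]; omega
    exact hne (augView_mono this heqz)

/-- size of the view-class of `x` at depth `ℓ`. -/
noncomputable def clsCard (ℓ : ℕ) (x : Fin PG.n) : ℕ :=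
  (Finset.univ.filter fun y => PG.augView ℓ y = PG.augView ℓ x).card

lemma clsCard_pos (ℓ : ℕ) (x : Fin PG.n) : 1 ≤ clsCard PG ℓ x :=
  Finset.card_pos.2 ⟨x, Finset.mem_filter.2 ⟨Finset.mem_univ x, rfl⟩⟩

/-- Doubling lemma. -/
lemma doubling (hf : PG.Feasible) {m k : ℕ} (hD : PG.diam ≤ m) (hm : m < PG.electionIndex)
    (hk : ∀ y, k ≤ clsCard PG (m + PG.diam + 1) y) (x : Fin PG.n) :
    2 * k ≤ clsCard PG (m - PG.diam) x := by
  obtain ⟨x', heq, hne⟩ := companion PG hf hD hm x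
  classical
  set A := Finset.univ.filter fun y =>
    PG.augView (m + PG.diam + 1) y = PG.augView (m + PG.diam + 1) x with hA
  set B := Finset.univ.filter fun y =>
    PG.augView (m + PG.diam + 1) y = PG.augView (m + PG.diam + 1) x' with hB
  have hsubA : A ⊆ Finset.univ.filter fun y =>
      PG.augView (m - PG.diam) y = PG.augView (m - PG.diam) x := by
    intro y hy
    simp only [hA, Finset.mem_filter] at hy ⊢
    exact ⟨hy.1, augView_mono (by omega) hy.2⟩
  have hsubB : B ⊆ Finset.univ.filter fun y =>
      PG.augView (m - PG.diam) y = PG.augView (m - PG.diam) x := by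
    intro y hy
    simp only [hB, Finset.mem_filter] at hy ⊢
    exact ⟨hy.1, (augView_mono (by omega) hy.2).trans heq.symm⟩
  have hdisj : Disjoint A B := by
    rw [Finset.disjoint_left]
    intro y hyA hyB
    simp only [hA, hB, Finset.mem_filter] at hyA hyB
    exact hne (hyA.2.symm.trans hyB.2)
  have hunion : A ∪ B ⊆ Finset.univ.filter fun y =>
      PG.augView (m - PG.diam) y = PG.augView (m - PG.diam) x :=
    Finset.union_subset hsubA hsubB
  have hcards : A.card + B.card = (A ∪ B).card := (Finset.card_union_of_disjoint hdisj).symm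
  have hAk : k ≤ A.card := hk x
  have hBk : k ≤ B.card := hk x'
  have := Finset.card_le_card hunion
  calc 2 * k = k + k := by ring
    _ ≤ A.card + B.card := Nat.add_le_add hAk hBk
    _ = (A ∪ B).card := hcards
    _ ≤ _ := this

/-- Geometric growth of class sizes. -/
lemma chain (hf : PG.Feasible) :
    ∀ j ℓ : ℕ, ℓ + PG.diam + j * (2 * PG.diam + 1) + 1 ≤ PG.electionIndex →
      ∀ x, 2 ^ j ≤ clsCard PG ℓ x := by
  intro j
  induction j with
  | zero => intro ℓ _ x; simpa using clsCard_pos PG ℓ x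
  | succ j ih =>
    intro ℓ hle x
    have hstep : (j+1) * (2*PG.diam+1) = j*(2*PG.diam+1) + (2*PG.diam+1) := by ring
    set m := ℓ + PG.diam with hm
    have hmlt : m < PG.electionIndex := by omega
    have hDm : PG.diam ≤ m := by omega
    have hk : ∀ y, 2 ^ j ≤ clsCard PG (m + PG.diam + 1) y := by
      intro y
      have e : m + PG.diam + 1 = ℓ + (2 * PG.diam + 1) := by omega
      rw [e]
      exact ih (ℓ + (2 * PG.diam + 1)) (by omega) y
    have := doubling PG hf hDm hmlt hk x
    have e2 : m - PG.diam = ℓ := by omega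
    rw [e2] at this
    calc (2:ℕ) ^ (j+1) = 2 * 2 ^ j := by ring
      _ ≤ _ := this

/-- counting: number of classes times min class size is at most n. -/
lemma count_total {ℓ k : ℕ} (hk : ∀ x, k ≤ clsCard PG ℓ x) :
    nviews PG ℓ * k ≤ PG.n := by
  classical
  have hsum : (Finset.univ : Finset (Fin PG.n)).card =
      ∑ b ∈ Finset.univ.image (PG.augView ℓ),
        (Finset.univ.filter fun y => PG.augView ℓ y = b).card := by
    exact Finset.card_eq_sum_card_fiberwise (by intro x _; exact Finset.mem_image_of_mem _ (Finset.mem_univ x))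
  have hlow : ∀ b ∈ Finset.univ.image (PG.augView ℓ),
      k ≤ (Finset.univ.filter fun y => PG.augView ℓ y = b).card := by
    intro b hb
    obtain ⟨x, _, rfl⟩ := Finset.mem_image.1 hb
    exact hk x
  have := Finset.card_nsmul_le_sum (Finset.univ.image (PG.augView ℓ))
    (fun b => (Finset.univ.filter fun y => PG.augView ℓ y = b).card) k hlow
  simp only [smul_eq_mul] at this
  calc nviews PG ℓ * k ≤ _ := this
    _ = (Finset.univ : Finset (Fin PG.n)).card := hsum.symm
    _ = PG.n := by simp

/-- Key natural-number estimate. -/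
lemma key_nat (hf : PG.Feasible) (hD1 : 1 ≤ PG.diam)
    (hbig : 8 * PG.diam + 1 ≤ PG.electionIndex) :
    ∃ j : ℕ, 1 ≤ j ∧ PG.diam * 2 ^ j ≤ PG.n ∧
      PG.electionIndex ≤ 7 * PG.diam * (j + 1) := by
  set D := PG.diam with hD
  set φ := PG.electionIndex with hφ
  set Gg := 2 * D + 1 with hGg
  set T := φ - 1 - D with hT
  set j := T / (2 * Gg) with hj
  have hTval : T + D + 1 = φ := by omega
  have h2 : j * (2 * Gg) ≤ T := Nat.div_mul_le_self T (2 * Gg)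
  have h3 : T % (2 * Gg) < 2 * Gg := Nat.mod_lt _ (by omega)
  have h4 : 2 * Gg * j + T % (2 * Gg) = T := by
    rw [hj]; exact Nat.div_add_mod T (2*Gg)
  -- j ≥ 1
  have hj1 : 1 ≤ j := by
    rw [hj]
    apply Nat.one_le_div_iff (by omega) |>.2
    omega
  -- class size bound via chain at ℓ := T - j * Gg
  set ℓ := T - j * Gg with hℓ
  have hjG : j * Gg ≤ T := by
    calc j * Gg ≤ j * (2 * Gg) := Nat.mul_le_mul_left j (by omega)
      _ ≤ T := h2
  have hcond : ℓ + D + j * (2 * D + 1) + 1 ≤ φ := by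
    have hgg : j * Gg = j * (2 * D + 1) := by rw [hGg]
    have : ℓ + j * Gg = T := by omega
    omega
  have hcls : ∀ x, 2 ^ j ≤ clsCard PG ℓ x := chain PG hf j ℓ hcond
  have hcount : nviews PG ℓ * 2 ^ j ≤ PG.n := count_total PG hcls
  have hℓle : ℓ ≤ φ := by omega
  have hnv : ℓ + 1 ≤ nviews PG ℓ := nviews_ge PG hf ℓ hℓle
  -- ℓ ≥ D
  have h2l : 2 * (j * Gg) ≤ T := by
    calc 2 * (j * Gg) = j * (2 * Gg) := by ring
      _ ≤ T := h2
  have hTbig : 7 * D ≤ T := by omega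
  have hℓD : D ≤ ℓ + 1 := by omega
  have hDn : D * 2 ^ j ≤ PG.n := by
    calc D * 2 ^ j ≤ (ℓ + 1) * 2 ^ j := Nat.mul_le_mul_right _ hℓD
      _ ≤ nviews PG ℓ * 2 ^ j := Nat.mul_le_mul_right _ hnv
      _ ≤ PG.n := hcount
  refine ⟨j, hj1, hDn, ?_⟩
  -- φ ≤ 7 D (j+1)
  have hGgval : Gg = 2 * D + 1 := hGg
  nlinarith [h4, h3, hTval, hD1, hj1, sq_nonneg (j : ℤ)]

lemma diam_pos : 1 ≤ PG.diam := by
  have h3 := PG.three_le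
  have v : Fin PG.n := ⟨0, by omega⟩
  obtain ⟨u, hu⟩ := exists_ne_of_three_le PG v
  have : 0 < PG.G.dist u v := PG.conn.pos_dist_of_ne hu
  exact le_trans this (dist_le_diam PG u v)

lemma diam_lt_n : PG.diam < PG.n := by
  have hmem : PG.diam ∈ Set.range fun p : Fin PG.n × Fin PG.n => PG.G.dist p.1 p.2 := by
    apply Set.Nonempty.csSup_mem
    · exact ⟨PG.G.dist ⟨0, by have := PG.three_le; omega⟩ ⟨0, by have := PG.three_le; omega⟩,
        ⟨(_, _), rfl⟩⟩
    · exact Set.finite_range _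
  obtain ⟨⟨u, v⟩, huv⟩ := hmem
  simp only [] at huv
  obtain ⟨w, hwlen⟩ := PG.conn.exists_walk_length_eq_dist u v
  have hpath : w.IsPath := w.isPath_of_length_eq_dist hwlen
  have := hpath.length_lt
  simp only [Fintype.card_fin] at this
  omega

theorem electionIndex_upper_bound' (PG : PortGraph) (hf : PG.Feasible) :
      (PG.electionIndex : ℝ) ≤
        8 * (PG.diam : ℝ) * (1 + Real.logb 2 ((PG.n : ℝ) / (PG.diam : ℝ))) := by
  have hD1 : 1 ≤ PG.diam := diam_pos PG
  have hDn : PG.diam < PG.n := diam_lt_n PG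
  have hDpos : (0:ℝ) < (PG.diam : ℝ) := by exact_mod_cast hD1
  have hratio : (1:ℝ) ≤ (PG.n : ℝ) / (PG.diam : ℝ) := by
    rw [le_div_iff₀ hDpos]
    have : (PG.diam : ℝ) ≤ (PG.n : ℝ) := by exact_mod_cast hDn.le
    linarith
  have hlogb : (0:ℝ) ≤ Real.logb 2 ((PG.n : ℝ) / (PG.diam : ℝ)) := Real.logb_nonneg (by norm_num) hratio
  by_cases hbig : 8 * PG.diam + 1 ≤ PG.electionIndex
  · obtain ⟨j, hj1, hjn, hjφ⟩ := key_nat PG hf hD1 hbig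
    have hcast : (PG.electionIndex : ℝ) ≤ 7 * (PG.diam : ℝ) * ((j : ℝ) + 1) := by
      exact_mod_cast hjφ
    have hjlog : (j : ℝ) ≤ Real.logb 2 ((PG.n : ℝ) / (PG.diam : ℝ)) := by
      have hpow : (2:ℝ) ^ j ≤ (PG.n : ℝ) / (PG.diam : ℝ) := by
        rw [le_div_iff₀ hDpos]
        calc (2:ℝ) ^ j * (PG.diam : ℝ) = (PG.diam : ℝ) * (2:ℝ) ^ j := by ring
          _ ≤ (PG.n : ℝ) := by exact_mod_cast hjn
      calc (j : ℝ) = (j : ℝ) * Real.logb 2 2 := by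
            rw [Real.logb_self_eq_one (by norm_num)]; ring
        _ = Real.logb 2 ((2:ℝ) ^ j) := (Real.logb_pow 2 2 j).symm
        _ ≤ Real.logb 2 ((PG.n : ℝ) / (PG.diam : ℝ)) :=
            Real.logb_le_logb_of_le (by norm_num) (by positivity) hpow
    calc (PG.electionIndex : ℝ) ≤ 7 * (PG.diam : ℝ) * ((j : ℝ) + 1) := hcast
      _ ≤ 8 * (PG.diam : ℝ) * (1 + Real.logb 2 ((PG.n : ℝ) / (PG.diam : ℝ))) := by
          nlinarith [hjlog, hDpos, hlogb]
  · push_neg at hbig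
    have : (PG.electionIndex : ℝ) ≤ 8 * (PG.diam : ℝ) := by
      have : PG.electionIndex ≤ 8 * PG.diam := by omega
      exact_mod_cast this
    nlinarith [hlogb, hDpos]

end Aux

/-- There is a constant `C > 0` such that every feasible port-numbered graph with `n`
nodes and diameter `D` has election index at most `C · D · (1 + log (n / D))`. -/
theorem electionIndex_upper_bound :
    ∃ C : ℝ, 0 < C ∧ ∀ PG : PortGraph, PG.Feasible →
      (PG.electionIndex : ℝ) ≤
        C * (PG.diam : ℝ) * (1 + Real.logb 2 ((PG.n : ℝ) / (PG.diam : ℝ))) := by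
  exact ⟨8, by norm_num, fun PG hf => electionIndex_upper_bound' PG hf⟩

end Election
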